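/- Let T ⊆ ℂ be non-resonant and set H = { e^{2πi t} : t ∈ T }. Then the map R ↦ exp(2πi·R) induces a bijection between similarity classes of n×n complex matrices with all eigenvalues in T and similarity classes of matrices in GL_n(ℂ) with all eigenvalues in H. -/

import Mathlib

open scoped Real
open Complex Polynomial

noncomputable section Stmt4Aux

/-- Truncated exponential series centered at `t`. -/
def stmt4_etr (n : ℕ) (t : ℂ) : Polynomial ℂ :=
  ∑ k ∈ Finset.range (n + 2), C ((2 * ↑π * I) ^ k / (k.factorial : ℂ)) * (X - C t) ^ k

lemma stmt4_etr_eval (n : ℕ) (t : ℂ) : (stmt4_etr n t).eval t = 1 := by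
  rw [stmt4_etr, Polynomial.eval_finset_sum]
  rw [Finset.sum_eq_single 0]
  · simp
  · intro k hk hk0
    simp [pow_eq_zero_iff, hk0]
  · intro h; exact absurd (Finset.mem_range.mpr (by omega)) h

lemma stmt4_etr_factor (n : ℕ) (t : ℂ) :
    ∃ v : Polynomial ℂ, stmt4_etr n t - 1 = (X - C t) * v ∧ v.eval t = 2 * ↑π * I := by
  refine ⟨∑ k ∈ Finset.range (n + 1),
    C ((2 * ↑π * I) ^ (k + 1) / ((k + 1).factorial : ℂ)) * (X - C t) ^ k, ?_, ?_⟩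
  · rw [stmt4_etr, Finset.sum_range_succ']
    rw [Finset.mul_sum]
    simp only [pow_zero, Nat.factorial_zero, Nat.cast_one, div_one, mul_one, Polynomial.C_1,
      one_mul]
    rw [add_sub_cancel_right]
    apply Finset.sum_congr rfl
    intro k _
    ring
  · rw [Polynomial.eval_finset_sum, Finset.sum_eq_single 0]
    · simp
    · intro k hk hk0
      simp [pow_eq_zero_iff, hk0]
    · intro h; exact absurd (Finset.mem_range.mpr (by omega)) h

lemma stmt4_crt (N : ℕ) (S : Finset ℂ) (key : ℂ → ℂ)
    (hkey : ∀ s ∈ S, ∀ t ∈ S, key s = key t → s = t) (c : ℂ → Polynomial ℂ) :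
    ∃ g : Polynomial ℂ, ∀ t ∈ S, (X - C (key t)) ^ N ∣ g - c t := by
  classical
  induction S using Finset.induction_on with
  | empty => exact ⟨0, by simp⟩
  | @insert a s ha ih =>
      obtain ⟨g', hg'⟩ := ih (fun x hx y hy h => hkey x (Finset.mem_insert_of_mem hx) y
        (Finset.mem_insert_of_mem hy) h)
      set p : Polynomial ℂ := (X - C (key a)) ^ N with hp
      set q : Polynomial ℂ := ∏ t ∈ s, (X - C (key t)) ^ N with hq
      have hcop : IsCoprime p q := by
        apply IsCoprime.prod_right
        intro t ht
        apply IsCoprime.pow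
        apply Polynomial.isCoprime_X_sub_C_of_isUnit_sub
        have : key a ≠ key t := by
          intro h
          exact ha (by
            have := hkey a (Finset.mem_insert_self a s) t (Finset.mem_insert_of_mem ht) h
            rwa [this])
        exact (sub_ne_zero.mpr this).isUnit
      obtain ⟨u, v, huv⟩ := hcop
      have huv' : v * q + u * p - 1 = 0 := by rw [add_comm, huv, sub_self]
      refine ⟨c a * (v * q) + g' * (u * p), ?_⟩
      intro t ht
      rcases Finset.mem_insert.mp ht with rfl | hts
      · have h : c t * (v * q) + g' * (u * p) - c t
            = (g' - c t) * (u * p) + c t * (v * q + u * p - 1) := by ring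
        rw [h, huv', mul_zero, add_zero]
        exact Dvd.dvd.mul_left (dvd_mul_left p u) _
      · have h1 : (X - C (key t)) ^ N ∣ q := Finset.dvd_prod_of_mem _ hts
        have h2 : (X - C (key t)) ^ N ∣ g' - c t := hg' t hts
        have h : c a * (v * q) + g' * (u * p) - c t
            = (c a - g') * (v * q) + (g' - c t) + g' * (u * p + v * q - 1) := by ring
        rw [h, huv, sub_self, mul_zero, add_zero]
        exact dvd_add (Dvd.dvd.mul_left (h1.mul_left v) _) h2

lemma stmt4_spec_root {n : ℕ} (R : Matrix (Fin n) (Fin n) ℂ) (t : ℂ) :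
    t ∈ spectrum ℂ R ↔ R.charpoly.IsRoot t := by
  rw [spectrum.mem_iff, Matrix.charpoly, Polynomial.IsRoot]
  have h1 : (Matrix.charmatrix R).det.eval t
      = ((Matrix.charmatrix R).map (Polynomial.evalRingHom t)).det := by
    have := RingHom.map_det (Polynomial.evalRingHom t) (Matrix.charmatrix R)
    rwa [RingHom.mapMatrix_apply] at this
  have h2 : (Matrix.charmatrix R).map (Polynomial.evalRingHom t)
      = (algebraMap ℂ (Matrix (Fin n) (Fin n) ℂ)) t - R := by
    ext i j
    by_cases h : i = j <;>
      simp [h, Matrix.charmatrix, Matrix.map_apply, Matrix.algebraMap_matrix_apply]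
  rw [h1, h2, Matrix.isUnit_iff_isUnit_det, isUnit_iff_ne_zero, not_not]

lemma stmt4_spec_finset {n : ℕ} (R : Matrix (Fin n) (Fin n) ℂ) :
    ↑R.charpoly.roots.toFinset = spectrum ℂ R := by
  ext t
  rw [Finset.mem_coe, Multiset.mem_toFinset,
    Polynomial.mem_roots R.charpoly_monic.ne_zero, ← stmt4_spec_root]

lemma stmt4_killer {n N : ℕ} (hn : n ≤ N) (R : Matrix (Fin n) (Fin n) ℂ) (S : Finset ℂ)
    (hspec : spectrum ℂ R ⊆ ↑S) (q : Polynomial ℂ)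
    (hdvd : ∀ t ∈ S, (X - C t) ^ N ∣ q) : Polynomial.aeval R q = 0 := by
  classical
  have hpq : (∏ t ∈ S, (X - C t) ^ N) ∣ q := by
    apply Finset.prod_dvd_of_coprime
    · intro a ha b hb hab
      exact IsCoprime.pow (Polynomial.isCoprime_X_sub_C_of_isUnit_sub
        (sub_ne_zero.mpr (by exact fun h => hab h)).isUnit)
    · exact hdvd
  have hcp : R.charpoly ∣ ∏ t ∈ S, (X - C t) ^ N := by
    have hsplit := (IsAlgClosed.splits R.charpoly).eq_prod_roots_of_monic R.charpoly_monic
    rw [hsplit]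
    have hle : R.charpoly.roots ≤ S.val.bind (fun t => Multiset.replicate N t) := by
      rw [Multiset.le_iff_count]
      intro t
      rw [Multiset.count_bind]
      by_cases ht : t ∈ S
      · calc Multiset.count t R.charpoly.roots ≤ Multiset.card R.charpoly.roots :=
            Multiset.count_le_card _ _
          _ ≤ R.charpoly.natDegree := Polynomial.card_roots' _
          _ = n := by rw [Matrix.charpoly_natDegree_eq_dim, Fintype.card_fin]
          _ ≤ N := hn
          _ = (Multiset.map (fun b => Multiset.count t (Multiset.replicate N b)) S.val).sum := by
            rw [show (fun b => Multiset.count t (Multiset.replicate N b))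
                = fun b => if b = t then N else 0 from funext fun b => Multiset.count_replicate ..]
            show (N:ℕ) = ∑ b ∈ S, if b = t then N else 0
            rw [Finset.sum_ite_eq' S t (fun _ => N), if_pos ht]
      · have : Multiset.count t R.charpoly.roots = 0 := by
          rw [Multiset.count_eq_zero]
          intro hmem
          have := (Polynomial.mem_roots R.charpoly_monic.ne_zero).mp hmem
          exact ht (hspec ((stmt4_spec_root R t).mpr this))
        simp [this]
    calc (R.charpoly.roots.map (fun a => X - C a)).prod
        ∣ ((S.val.bind (fun t => Multiset.replicate N t)).map (fun a => X - C a)).prod :=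
          Multiset.prod_dvd_prod_of_le (Multiset.map_le_map hle)
      _ = ∏ t ∈ S, (X - C t) ^ N := by
          rw [Multiset.map_bind, Multiset.prod_bind]
          simp [Multiset.map_replicate, Multiset.prod_replicate]
  obtain ⟨d, hd⟩ := dvd_trans hcp hpq
  rw [hd, map_mul, Matrix.aeval_self_charpoly, zero_mul]

lemma stmt4_dvd_comp_sub_comp (p a b : Polynomial ℂ) : (a - b) ∣ p.comp a - p.comp b := by
  induction p using Polynomial.induction_on with
  | C c => simp
  | add p q hp hq =>
      have : (p + q).comp a - (p + q).comp b = (p.comp a - p.comp b) + (q.comp a - q.comp b) := by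
        simp [Polynomial.add_comp]; ring
      rw [this]; exact dvd_add hp hq
  | monomial m c _ =>
      have : (C c * X ^ (m + 1)).comp a - (C c * X ^ (m + 1)).comp b
          = C c * (a ^ (m + 1) - b ^ (m + 1)) := by
        simp [Polynomial.mul_comp, Polynomial.pow_comp]; ring
      rw [this]
      exact Dvd.dvd.mul_left (sub_dvd_pow_sub_pow a b (m + 1)) _

lemma stmt4_approx (N : ℕ) {t μ : ℂ} {G u : Polynomial ℂ}
    (hG : G - C μ = (X - C t) * u) (hu : u.eval t ≠ 0) (c : Polynomial ℂ) :
    ∃ q : Polynomial ℂ, (X - C t) ^ N ∣ q.comp G - c := by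
  suffices h : ∀ j k (c : Polynomial ℂ), N ≤ k + j →
      ∃ q : Polynomial ℂ, (X - C t) ^ N ∣ q.comp G - (X - C t) ^ k * c by
    obtain ⟨q, hq⟩ := h N 0 c (by omega)
    exact ⟨q, by simpa using hq⟩
  intro j
  induction j with
  | zero =>
      intro k c hk
      refine ⟨0, ?_⟩
      simp only [Polynomial.zero_comp, zero_sub, dvd_neg]
      exact (pow_dvd_pow _ (by omega)).mul_right c
  | succ j ih =>
      intro k c hk
      by_cases hNk : N ≤ k
      · refine ⟨0, ?_⟩
        simp only [Polynomial.zero_comp, zero_sub, dvd_neg]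
        exact (pow_dvd_pow _ hNk).mul_right c
      · set a : ℂ := c.eval t / u.eval t ^ k with hadef
        set q₁ : Polynomial ℂ := C a * (X - C μ) ^ k with hq₁
        have hq₁G : q₁.comp G = (X - C t) ^ k * (C a * u ^ k) := by
          rw [hq₁, Polynomial.mul_comp, Polynomial.C_comp, Polynomial.pow_comp,
            Polynomial.sub_comp, Polynomial.X_comp, Polynomial.C_comp, hG, mul_pow]
          ring
        set w : Polynomial ℂ := c - C a * u ^ k with hw
        have hwt : w.eval t = 0 := by
          rw [hw]
          simp only [Polynomial.eval_sub, Polynomial.eval_mul, Polynomial.eval_C,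
            Polynomial.eval_pow]
          rw [hadef, div_mul_cancel₀ _ (pow_ne_zero k hu)]
          ring
        obtain ⟨w', hw'⟩ := (Polynomial.dvd_iff_isRoot.mpr hwt)
        obtain ⟨q₂, hq₂⟩ := ih (k + 1) w' (by omega)
        refine ⟨q₁ + q₂, ?_⟩
        have key : (q₁ + q₂).comp G - (X - C t) ^ k * c
            = q₂.comp G - (X - C t) ^ (k + 1) * w' := by
          rw [Polynomial.add_comp, hq₁G]
          have : (X - C t) ^ (k + 1) * w' = (X - C t) ^ k * w := by
            rw [pow_succ, hw']; ring
          rw [this, hw]; ring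
        rw [key]; exact hq₂

lemma stmt4_polys (n : ℕ) (S : Finset ℂ)
    (hinj : ∀ s ∈ S, ∀ t ∈ S,
      Complex.exp (2 * ↑π * I * s) = Complex.exp (2 * ↑π * I * t) → s = t) :
    ∃ g f : Polynomial ℂ,
      (∀ t ∈ S, (X - C t) ^ (n + 2) ∣
          g - C (Complex.exp (2 * ↑π * I * t)) * stmt4_etr n t) ∧
      (∀ t ∈ S, g.eval t = Complex.exp (2 * ↑π * I * t)) ∧
      (∀ t ∈ S, (X - C t) ^ (n + 2) ∣ f.comp g - X) ∧
      (∀ t ∈ S, f.eval (Complex.exp (2 * ↑π * I * t)) = t) ∧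
      (∀ t ∈ S, (X - C (Complex.exp (2 * ↑π * I * t))) ^ (n + 2) ∣ g.comp f - X) := by
  classical
  set N := n + 2 with hN
  set μ : ℂ → ℂ := fun t => Complex.exp (2 * ↑π * I * t) with hμ
  obtain ⟨g, hg⟩ := stmt4_crt N S (fun t => t) (fun s _ t _ h => h)
    (fun t => C (μ t) * stmt4_etr n t)
  have hfac : ∀ t : ℂ, ∃ u : Polynomial ℂ, t ∈ S →
      g - C (μ t) = (X - C t) * u ∧ u.eval t ≠ 0 := by
    intro t
    by_cases ht : t ∈ S
    · obtain ⟨d, hd⟩ := hg t ht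
      obtain ⟨v, hv, hvt⟩ := stmt4_etr_factor n t
      refine ⟨C (μ t) * v + (X - C t) ^ (n + 1) * d, fun _ => ⟨?_, ?_⟩⟩
      · have : g - C (μ t) = (g - C (μ t) * stmt4_etr n t) + C (μ t) * (stmt4_etr n t - 1) := by
          ring
        rw [this, hd, hv]
        rw [hN]; ring
      · simp only [Polynomial.eval_add, Polynomial.eval_mul, Polynomial.eval_C,
          Polynomial.eval_pow, Polynomial.eval_sub, Polynomial.eval_X, sub_self,
          zero_pow (Nat.succ_ne_zero n), zero_mul, add_zero, hvt]
        exact mul_ne_zero (Complex.exp_ne_zero _)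
          (by
            apply mul_ne_zero (mul_ne_zero two_ne_zero _) Complex.I_ne_zero
            exact_mod_cast Complex.ofReal_ne_zero.mpr Real.pi_ne_zero)
    · exact ⟨0, fun h => absurd h ht⟩
  choose uu huu using hfac
  have happ : ∀ t : ℂ, ∃ q : Polynomial ℂ, t ∈ S → (X - C t) ^ N ∣ q.comp g - X := by
    intro t
    by_cases ht : t ∈ S
    · obtain ⟨q, hq⟩ := stmt4_approx N (huu t ht).1 (huu t ht).2 X
      exact ⟨q, fun _ => hq⟩
    · exact ⟨0, fun h => absurd h ht⟩
  choose FF hFF using happ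
  obtain ⟨f, hf⟩ := stmt4_crt N S μ hinj FF
  have hgev : ∀ t ∈ S, g.eval t = μ t := by
    intro t ht
    obtain ⟨d, hd⟩ := hg t ht
    have := congrArg (Polynomial.eval t) hd
    simp only [Polynomial.eval_sub, Polynomial.eval_mul, Polynomial.eval_pow,
      Polynomial.eval_X, Polynomial.eval_C, sub_self,
      zero_pow (by omega : (N:ℕ) ≠ 0), zero_mul] at this
    rw [sub_eq_zero] at this
    rw [this, stmt4_etr_eval, mul_one]
  have hF5 : ∀ t ∈ S, (X - C t) ^ N ∣ f.comp g - X := by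
    intro t ht
    obtain ⟨h, hh⟩ := hf t ht
    have hsplit : f.comp g - X = (g - C (μ t)) ^ N * h.comp g + ((FF t).comp g - X) := by
      have : f.comp g = ((f - FF t) + FF t).comp g := by ring_nf
      rw [this, Polynomial.add_comp, hh, Polynomial.mul_comp, Polynomial.pow_comp,
        Polynomial.sub_comp, Polynomial.X_comp, Polynomial.C_comp]
      ring
    rw [hsplit]
    refine dvd_add ?_ (hFF t ht)
    rw [(huu t ht).1, mul_pow]
    exact (dvd_mul_right _ _).mul_right _
  have hF6 : ∀ t ∈ S, f.eval (μ t) = t := by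
    intro t ht
    obtain ⟨w, hw⟩ := hF5 t ht
    have := congrArg (Polynomial.eval t) hw
    simp only [Polynomial.eval_sub, Polynomial.eval_mul, Polynomial.eval_pow,
      Polynomial.eval_comp, Polynomial.eval_X, Polynomial.eval_C, sub_self,
      zero_pow (by omega : (N:ℕ) ≠ 0), zero_mul] at this
    rw [sub_eq_zero] at this
    rwa [hgev t ht] at this
  have hF7 : ∀ t ∈ S, (X - C (μ t)) ^ N ∣ g.comp f - X := by
    intro t ht
    set D : Polynomial ℂ := g.comp f - X with hD
    have hDg : (X - C t) ^ N ∣ D.comp g := by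
      have h1 : D.comp g = g.comp (f.comp g) - g := by
        rw [hD, Polynomial.sub_comp, Polynomial.comp_assoc, Polynomial.X_comp]
      rw [h1]
      refine dvd_trans (hF5 t ht) ?_
      have := stmt4_dvd_comp_sub_comp g (f.comp g) X
      rwa [Polynomial.comp_X] at this
    by_cases hD0 : D = 0
    · rw [hD0]; exact dvd_zero _
    obtain ⟨D₁, hD₁, hnd⟩ := D.exists_eq_pow_rootMultiplicity_mul_and_not_dvd hD0 (μ t)
    set m := D.rootMultiplicity (μ t) with hm
    have hDg2 : D.comp g = (X - C t) ^ m * ((uu t) ^ m * D₁.comp g) := by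
      rw [hD₁, Polynomial.mul_comp, Polynomial.pow_comp, Polynomial.sub_comp,
        Polynomial.X_comp, Polynomial.C_comp, (huu t ht).1, mul_pow]
      ring
    have hE : ((uu t) ^ m * D₁.comp g).eval t ≠ 0 := by
      simp only [Polynomial.eval_mul, Polynomial.eval_pow, Polynomial.eval_comp]
      rw [hgev t ht]
      exact mul_ne_zero (pow_ne_zero _ (huu t ht).2)
        (fun h => hnd (Polynomial.dvd_iff_isRoot.mpr h))
    have hNm : N ≤ m := by
      by_contra hlt
      push_neg at hlt
      have h1 : (X - C t) ^ (m + 1) ∣ (X - C t) ^ m * ((uu t) ^ m * D₁.comp g) := by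
        rw [← hDg2]
        exact dvd_trans (pow_dvd_pow _ (by omega)) hDg
      rw [pow_succ] at h1
      have h2 := (mul_dvd_mul_iff_left
        (pow_ne_zero m (Polynomial.X_sub_C_ne_zero t))).mp h1
      exact hE ((Polynomial.dvd_iff_isRoot.mp h2))
    calc (X - C (μ t)) ^ N ∣ (X - C (μ t)) ^ m := pow_dvd_pow _ hNm
      _ ∣ D := by rw [hD₁]; exact dvd_mul_right _ _
  exact ⟨g, f, hg, hgev, hF5, hF6, hF7⟩

lemma stmt4_summable {n : ℕ} (A : Matrix (Fin n) (Fin n) ℂ) :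
    Summable (fun k : ℕ => (k.factorial⁻¹ : ℂ) • A ^ k) := by
  letI : SeminormedRing (Matrix (Fin n) (Fin n) ℂ) := Matrix.linftyOpSemiNormedRing
  letI : NormedRing (Matrix (Fin n) (Fin n) ℂ) := Matrix.linftyOpNormedRing
  letI : NormedAlgebra ℂ (Matrix (Fin n) (Fin n) ℂ) := Matrix.linftyOpNormedAlgebra
  exact NormedSpace.expSeries_summable' A

lemma stmt4_aeval_C_mul {n : ℕ} (R : Matrix (Fin n) (Fin n) ℂ) (a : ℂ) (p : Polynomial ℂ) :
    Polynomial.aeval R (C a * p) = a • Polynomial.aeval R p := by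
  rw [map_mul, Polynomial.aeval_C, ← Algebra.smul_def]

lemma stmt4_exp_eq {n : ℕ} (R : Matrix (Fin n) (Fin n) ℂ) (S : Finset ℂ)
    (hspec : spectrum ℂ R ⊆ ↑S) (g : Polynomial ℂ)
    (hg : ∀ t ∈ S, (X - C t) ^ (n + 2) ∣
        g - C (Complex.exp (2 * ↑π * I * t)) * stmt4_etr n t) :
    NormedSpace.exp ((2 * ↑π * I) • R) = Polynomial.aeval R g := by
  classical
  set c2 : ℂ := 2 * ↑π * I with hc2
  set N : ℕ := n + 2 with hN
  have hkill : ∀ q : Polynomial ℂ, (∀ s ∈ S, (X - C s) ^ N ∣ q) → Polynomial.aeval R q = 0 :=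
    fun q h => stmt4_killer (by omega) R S hspec q h
  have hidem : ∀ t : ℂ, ∃ e : Polynomial ℂ, t ∈ S →
      ∀ s ∈ S, (X - C s) ^ N ∣ e - (if s = t then 1 else 0) := by
    intro t
    by_cases ht : t ∈ S
    · obtain ⟨e, he⟩ := stmt4_crt N S (fun s => s) (fun a _ b _ h => h)
        (fun s => if s = t then 1 else 0)
      exact ⟨e, fun _ => he⟩
    · exact ⟨0, fun h => absurd h ht⟩
  choose ee hee using hidem
  have hone : ∀ s ∈ S, (X - C s) ^ N ∣ (∑ t ∈ S, ee t) - 1 := by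
    intro s hs
    have h1 : (∑ t ∈ S, ee t) - 1 = ∑ t ∈ S, (ee t - if s = t then 1 else 0) := by
      rw [Finset.sum_sub_distrib]
      congr 1
      rw [Finset.sum_ite_eq S s (fun _ => (1 : Polynomial ℂ)), if_pos hs]
    rw [h1]
    exact Finset.dvd_sum (fun t ht => hee t ht s hs)
  have hsum1 : ∑ t ∈ S, Polynomial.aeval R (ee t) = 1 := by
    have h0 : Polynomial.aeval R ((∑ t ∈ S, ee t) - 1) = 0 := hkill _ hone
    rw [map_sub, map_one, sub_eq_zero, map_sum] at h0
    exact h0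
  have hterm : ∀ t ∈ S, NormedSpace.exp (c2 • R) * Polynomial.aeval R (ee t)
      = Polynomial.aeval R (C (Complex.exp (c2 * t)) * stmt4_etr n t * ee t) := by
    intro t ht
    set B : Matrix (Fin n) (Fin n) ℂ := c2 • R - (c2 * t) • 1 with hB
    have hcomm : Commute ((c2 * t) • (1 : Matrix (Fin n) (Fin n) ℂ)) B :=
      Commute.smul_left (Commute.one_left B) _
    have h1 : NormedSpace.exp (c2 • R)
        = NormedSpace.exp ((c2 * t) • (1 : Matrix (Fin n) (Fin n) ℂ))
          * NormedSpace.exp B := by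
      rw [show c2 • R = (c2 * t) • (1 : Matrix (Fin n) (Fin n) ℂ) + B from by rw [hB]; abel]
      exact Matrix.exp_add_of_commute _ _ hcomm
    have h2 : NormedSpace.exp ((c2 * t) • (1 : Matrix (Fin n) (Fin n) ℂ))
        = Complex.exp (c2 * t) • (1 : Matrix (Fin n) (Fin n) ℂ) := by
      rw [Matrix.smul_one_eq_diagonal, Matrix.exp_diagonal, Pi.exp_def,
        ← Complex.exp_eq_exp_ℂ, Matrix.smul_one_eq_diagonal]
    have hBf : B = c2 • (Polynomial.aeval R (X - C t)) := by
      rw [map_sub, Polynomial.aeval_X, Polynomial.aeval_C, hB, smul_sub,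
        Algebra.algebraMap_eq_smul_one, smul_smul]
    have hBk : ∀ k : ℕ, B ^ k * Polynomial.aeval R (ee t)
        = c2 ^ k • Polynomial.aeval R ((X - C t) ^ k * ee t) := by
      intro k
      rw [hBf, _root_.smul_pow, smul_mul_assoc, ← map_pow, ← map_mul]
    have hvan : ∀ k : ℕ, k ∉ Finset.range N →
        ((k.factorial⁻¹ : ℂ) • B ^ k) * Polynomial.aeval R (ee t) = 0 := by
      intro k hk
      rw [smul_mul_assoc, hBk]
      have hz : Polynomial.aeval R ((X - C t) ^ k * ee t) = 0 := by
        apply hkill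
        intro s hs
        by_cases hst : s = t
        · subst hst
          exact dvd_mul_of_dvd_left (pow_dvd_pow _ (by simpa using hk)) _
        · have h3 := hee t ht s hs
          rw [if_neg hst, sub_zero] at h3
          exact Dvd.dvd.mul_left h3 _
      rw [hz, smul_zero, smul_zero]
    have h3 : NormedSpace.exp B * Polynomial.aeval R (ee t)
        = ∑ k ∈ Finset.range N, ((k.factorial⁻¹ : ℂ) • B ^ k) * Polynomial.aeval R (ee t) := by
      rw [NormedSpace.exp_eq_tsum (𝕂 := ℂ), ← Summable.tsum_mul_right _ (stmt4_summable B)]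
      exact tsum_eq_sum hvan
    rw [h1, mul_assoc, h3, h2]
    rw [smul_mul_assoc, one_mul, Finset.smul_sum]
    have hterm2 : ∀ k ∈ Finset.range N,
        Complex.exp (c2 * t) • (((k.factorial⁻¹ : ℂ) • B ^ k) * Polynomial.aeval R (ee t))
        = Polynomial.aeval R (C (Complex.exp (c2 * t) * (c2 ^ k / (k.factorial : ℂ)))
            * ((X - C t) ^ k * ee t)) := by
      intro k _
      rw [smul_mul_assoc, hBk, stmt4_aeval_C_mul, smul_smul, smul_smul]
      congr 1
      field_simp
    rw [Finset.sum_congr rfl hterm2, ← map_sum]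
    congr 1
    rw [stmt4_etr, Finset.mul_sum, Finset.sum_mul]
    apply Finset.sum_congr rfl
    intro k _
    rw [Polynomial.C_mul]
    ring
  have hfinal : Polynomial.aeval R
      (g - ∑ t ∈ S, C (Complex.exp (c2 * t)) * stmt4_etr n t * ee t) = 0 := by
    apply hkill
    intro s hs
    have hid : g - ∑ t ∈ S, C (Complex.exp (c2 * t)) * stmt4_etr n t * ee t
        = g * (1 - ∑ t ∈ S, ee t)
          + ∑ t ∈ S, (g - C (Complex.exp (c2 * t)) * stmt4_etr n t) * ee t := by
      have e1 : ∑ t ∈ S, (g - C (Complex.exp (c2 * t)) * stmt4_etr n t) * ee t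
          = ∑ t ∈ S, (g * ee t - (C (Complex.exp (c2 * t)) * stmt4_etr n t) * ee t) :=
        Finset.sum_congr rfl (fun t _ => by ring)
      rw [e1, Finset.sum_sub_distrib, mul_sub, mul_one, Finset.mul_sum]
      ring
    rw [hid]
    refine dvd_add ?_ (Finset.dvd_sum ?_)
    · have := hone s hs
      rw [show (1 : Polynomial ℂ) - ∑ t ∈ S, ee t = -((∑ t ∈ S, ee t) - 1) from by ring]
      exact Dvd.dvd.mul_left (dvd_neg.mpr this) g
    · intro t ht
      by_cases hst : s = t
      · subst hst
        exact (hg s hs).mul_right _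
      · have h3 := hee t ht s hs
        rw [if_neg hst, sub_zero] at h3
        exact Dvd.dvd.mul_left h3 _
  rw [map_sub, sub_eq_zero, map_sum] at hfinal
  calc NormedSpace.exp (c2 • R)
      = NormedSpace.exp (c2 • R) * ∑ t ∈ S, Polynomial.aeval R (ee t) := by
        rw [hsum1, mul_one]
    _ = ∑ t ∈ S, NormedSpace.exp (c2 • R) * Polynomial.aeval R (ee t) := by
        rw [Finset.mul_sum]
    _ = ∑ t ∈ S, Polynomial.aeval R (C (Complex.exp (c2 * t)) * stmt4_etr n t * ee t) :=
        Finset.sum_congr rfl hterm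
    _ = Polynomial.aeval R g := by rw [← hfinal]

lemma stmt4_aeval_conj {n : ℕ} (P M : Matrix (Fin n) (Fin n) ℂ) (hP : IsUnit P)
    (q : Polynomial ℂ) :
    Polynomial.aeval (P * M * P⁻¹) q = P * Polynomial.aeval M q * P⁻¹ := by
  have hdet : IsUnit P.det := (Matrix.isUnit_iff_isUnit_det P).mp hP
  have h1 : P⁻¹ * P = 1 := Matrix.nonsing_inv_mul P hdet
  have h2 : P * P⁻¹ = 1 := Matrix.mul_nonsing_inv P hdet
  let φ : Matrix (Fin n) (Fin n) ℂ →ₐ[ℂ] Matrix (Fin n) (Fin n) ℂ :=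
    { toFun := fun x => P * x * P⁻¹
      map_one' := by show P * 1 * P⁻¹ = 1; rw [mul_one, h2]
      map_mul' := fun x y => by
        show P * (x * y) * P⁻¹ = (P * x * P⁻¹) * (P * y * P⁻¹)
        simp only [mul_assoc]
        rw [← mul_assoc P⁻¹ P, h1, one_mul]
      map_zero' := by show P * 0 * P⁻¹ = 0; rw [mul_zero, zero_mul]
      map_add' := fun x y => by
        show P * (x + y) * P⁻¹ = P * x * P⁻¹ + P * y * P⁻¹
        rw [mul_add, add_mul]
      commutes' := fun c => by
        show P * algebraMap ℂ _ c * P⁻¹ = algebraMap ℂ _ c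
        rw [Algebra.algebraMap_eq_smul_one, mul_smul_comm, mul_one, smul_mul_assoc, h2] }
  exact Polynomial.aeval_algHom_apply φ M q

lemma stmt4_spec_empty (M : Matrix (Fin 0) (Fin 0) ℂ) : spectrum ℂ M = ∅ := by
  ext t
  simp only [Set.mem_empty_iff_false, iff_false, spectrum.mem_iff, not_not]
  exact isUnit_of_subsingleton _

lemma stmt4_spec_nonempty {n : ℕ} (hn : 0 < n) (M : Matrix (Fin n) (Fin n) ℂ) :
    (spectrum ℂ M).Nonempty := by
  obtain ⟨t, ht⟩ := Complex.exists_root (f := M.charpoly) (by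
    rw [Matrix.charpoly_degree_eq_dim, Fintype.card_fin]
    exact_mod_cast hn)
  exact ⟨t, (stmt4_spec_root M t).mpr ht⟩

end Stmt4Aux

def NonResonant (T : Set ℂ) : Prop :=
  ∀ s ∈ T, ∀ t ∈ T, (∃ k : ℤ, s - t = (k : ℂ)) → s = t

def MatSimilar {n : ℕ} (M N : Matrix (Fin n) (Fin n) ℂ) : Prop :=
  ∃ P : Matrix (Fin n) (Fin n) ℂ, IsUnit P ∧ N = P * M * P⁻¹

/-- For non-resonant `T` and `H = {e^{2πit} : t ∈ T}`, the map `R ↦ exp(2πi•R)` induces a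
bijection from similarity classes of matrices with spectrum in `T` to similarity classes of
invertible matrices with spectrum in `H`: it lands in the right set, it is injective and
surjective on similarity classes. -/
theorem stmt_4 (T : Set ℂ) (hT : NonResonant T) (H : Set ℂ)
    (hH : H = {h : ℂ | ∃ t ∈ T, h = Complex.exp (2 * π * I * t)}) (n : ℕ) :
    (∀ R : Matrix (Fin n) (Fin n) ℂ, spectrum ℂ R ⊆ T →
        IsUnit (NormedSpace.exp ((2 * π * I) • R)) ∧
          spectrum ℂ (NormedSpace.exp ((2 * π * I) • R)) ⊆ H) ∧
    (∀ R R' : Matrix (Fin n) (Fin n) ℂ, spectrum ℂ R ⊆ T → spectrum ℂ R' ⊆ T →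
        (MatSimilar (NormedSpace.exp ((2 * π * I) • R))
            (NormedSpace.exp ((2 * π * I) • R')) ↔ MatSimilar R R')) ∧
    (∀ G : Matrix (Fin n) (Fin n) ℂ, IsUnit G → spectrum ℂ G ⊆ H →
        ∃ R : Matrix (Fin n) (Fin n) ℂ, spectrum ℂ R ⊆ T ∧
          MatSimilar (NormedSpace.exp ((2 * π * I) • R)) G) := by
  classical
  have h2pi : (2 * ↑π * I : ℂ) ≠ 0 := by
    apply mul_ne_zero (mul_ne_zero two_ne_zero _) Complex.I_ne_zero
    exact_mod_cast Complex.ofReal_ne_zero.mpr Real.pi_ne_zero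
  have hinjT : ∀ s ∈ T, ∀ t ∈ T,
      Complex.exp (2 * ↑π * I * s) = Complex.exp (2 * ↑π * I * t) → s = t := by
    intro s hs t ht h
    apply hT s hs t ht
    have hone : Complex.exp (2 * ↑π * I * s - 2 * ↑π * I * t) = 1 := by
      rw [Complex.exp_sub, h, div_self (Complex.exp_ne_zero _)]
    obtain ⟨k, hk⟩ := Complex.exp_eq_one_iff.mp hone
    refine ⟨k, ?_⟩
    have h2 : (2 * ↑π * I : ℂ) * (s - t) = 2 * ↑π * I * (k : ℂ) := by
      rw [mul_sub, hk]; ring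
    exact mul_left_cancel₀ h2pi h2
  refine ⟨?_, ?_, ?_⟩
  · -- Part 1
    intro R hR
    refine ⟨Matrix.isUnit_exp _, ?_⟩
    rcases Nat.eq_zero_or_pos n with hn | hn
    · subst hn
      rw [stmt4_spec_empty]
      exact Set.empty_subset H
    · have hSspec : spectrum ℂ R ⊆ ↑R.charpoly.roots.toFinset := by
        rw [stmt4_spec_finset]
      have hST : ↑R.charpoly.roots.toFinset ⊆ T := by
        rw [stmt4_spec_finset]; exact hR
      obtain ⟨g, f, hg, hgev, -, -, -⟩ := stmt4_polys n R.charpoly.roots.toFinset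
        (fun s hs t ht h => hinjT s (hST hs) t (hST ht) h)
      rw [stmt4_exp_eq R _ hSspec g hg,
        spectrum.map_polynomial_aeval_of_nonempty R g (stmt4_spec_nonempty hn R)]
      rintro x ⟨s, hsspec, rfl⟩
      show Polynomial.eval s g ∈ H
      rw [hgev s (hSspec hsspec), hH]
      exact ⟨s, hR hsspec, rfl⟩
  · -- Part 2
    intro R R' hR hR'
    set S : Finset ℂ := R.charpoly.roots.toFinset ∪ R'.charpoly.roots.toFinset with hS
    have hRS : spectrum ℂ R ⊆ ↑S := by
      rw [hS, Finset.coe_union, ← stmt4_spec_finset]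
      exact Set.subset_union_left
    have hR'S : spectrum ℂ R' ⊆ ↑S := by
      rw [hS, Finset.coe_union, ← stmt4_spec_finset R']
      exact Set.subset_union_right
    have hST : ↑S ⊆ T := by
      rw [hS, Finset.coe_union]
      apply Set.union_subset <;> rw [stmt4_spec_finset]
      exacts [hR, hR']
    obtain ⟨g, f, hg, hgev, hfg, -, -⟩ := stmt4_polys n S
      (fun s hs t ht h => hinjT s (hST hs) t (hST ht) h)
    have hE : NormedSpace.exp ((2 * ↑π * I) • R) = Polynomial.aeval R g :=
      stmt4_exp_eq R S hRS g hg
    have hE' : NormedSpace.exp ((2 * ↑π * I) • R') = Polynomial.aeval R' g :=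
      stmt4_exp_eq R' S hR'S g hg
    have hback : ∀ (M : Matrix (Fin n) (Fin n) ℂ), spectrum ℂ M ⊆ ↑S →
        Polynomial.aeval (Polynomial.aeval M g) f = M := by
      intro M hM
      rw [← Polynomial.aeval_comp]
      have : f.comp g = (f.comp g - X) + X := by ring
      rw [this, map_add, Polynomial.aeval_X,
        stmt4_killer (by omega) M S hM _ (fun t ht => hfg t ht), zero_add]
    constructor
    · rintro ⟨P, hP, hPE⟩
      refine ⟨P, hP, ?_⟩
      rw [← hback R' hR'S, ← hE', hPE, hE, stmt4_aeval_conj P _ hP f, hback R hRS]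
    · rintro ⟨P, hP, hPR⟩
      refine ⟨P, hP, ?_⟩
      rw [hE', hPR, stmt4_aeval_conj P _ hP g, ← hE]
  · -- Part 3
    intro G hG hGH
    have hμchoice : ∀ μ : ℂ, ∃ t : ℂ, μ ∈ spectrum ℂ G →
        (t ∈ T ∧ μ = Complex.exp (2 * ↑π * I * t)) := by
      intro μ
      by_cases hμ : μ ∈ spectrum ℂ G
      · have : μ ∈ H := hGH hμ
        rw [hH] at this
        obtain ⟨t, ht, h⟩ := this
        exact ⟨t, fun _ => ⟨ht, h⟩⟩
      · exact ⟨0, fun h => absurd h hμ⟩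
    choose tf htf using hμchoice
    set S : Finset ℂ := G.charpoly.roots.toFinset.image tf with hSdef
    have hST : ↑S ⊆ T := by
      intro t ht
      rw [hSdef, Finset.coe_image] at ht
      obtain ⟨μ, hμ, rfl⟩ := ht
      have hμspec : μ ∈ spectrum ℂ G := by
        rw [← stmt4_spec_finset G]; exact hμ
      exact (htf μ hμspec).1
    obtain ⟨g, f, hg, hgev, hfg, hfev, hgf⟩ := stmt4_polys n S
      (fun s hs t ht h => hinjT s (hST hs) t (hST ht) h)
    set S' : Finset ℂ := S.image (fun t => Complex.exp (2 * ↑π * I * t)) with hS'def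
    have hGS' : spectrum ℂ G ⊆ ↑S' := by
      intro μ hμ
      have hroot : μ ∈ G.charpoly.roots.toFinset := by
        rw [← stmt4_spec_finset G] at hμ; exact hμ
      rw [hS'def, Finset.coe_image]
      exact ⟨tf μ, by
        rw [hSdef, Finset.coe_image]; exact ⟨μ, hroot, rfl⟩, ((htf μ hμ).2).symm⟩
    set R : Matrix (Fin n) (Fin n) ℂ := Polynomial.aeval G f with hRdef
    have hspecR : spectrum ℂ R ⊆ ↑S := by
      rcases Nat.eq_zero_or_pos n with hn | hn
      · subst hn
        rw [hRdef, stmt4_spec_empty]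
        exact Set.empty_subset _
      · rw [hRdef, spectrum.map_polynomial_aeval_of_nonempty G f (stmt4_spec_nonempty hn G)]
        rintro x ⟨μ, hμ, rfl⟩
        have hroot : μ ∈ G.charpoly.roots.toFinset := by
          rw [← stmt4_spec_finset G] at hμ; exact hμ
        have htfS : tf μ ∈ S := by
          rw [hSdef]; exact Finset.mem_image_of_mem tf hroot
        have hμeq : μ = Complex.exp (2 * ↑π * I * tf μ) := (htf μ hμ).2
        show Polynomial.eval μ f ∈ (↑S : Set ℂ)
        rw [hμeq, hfev (tf μ) htfS]
        exact Finset.mem_coe.mpr htfS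
    have hexp : NormedSpace.exp ((2 * ↑π * I) • R) = Polynomial.aeval R g :=
      stmt4_exp_eq R S hspecR g hg
    have hcomp : Polynomial.aeval R g = G := by
      have h1 : Polynomial.aeval R g = Polynomial.aeval G (g.comp f) := by
        rw [Polynomial.aeval_comp, hRdef]
      rw [h1]
      have hkillG : Polynomial.aeval G (g.comp f - X) = 0 := by
        apply stmt4_killer (N := n + 2) (by omega) G S' hGS'
        intro s' hs'
        rw [hS'def] at hs'
        obtain ⟨t, ht, rfl⟩ := Finset.mem_image.mp hs'
        exact hgf t ht
      have h2 : g.comp f = (g.comp f - X) + X := by ring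
      rw [h2, map_add, Polynomial.aeval_X, hkillG, zero_add]
    refine ⟨R, Set.Subset.trans hspecR hST, 1, isUnit_one, ?_⟩
    rw [hexp, hcomp, inv_one, one_mul, mul_one]
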